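/- Tangent addition formulas: for x, y ∈ ℂ and nonzero u, v ∈ ℂ, assuming the series defining sin_{s,t}(x,u), cos_{s,t}(x,u), sin_{s,t}(y,v) and cos_{s,t}(y,v) converge absolutely, and that cos_{s,t}(x,u) ≠ 0 and cos_{s,t}(y,v) ≠ 0: (1) if 1 − tan_{s,t}(x,u)·tan_{s,t}(y,v) ≠ 0, then tan_{s,t}(x ⊕_{u,v} y) = (tan_{s,t}(x,u) + tan_{s,t}(y,v))/(1 − tan_{s,t}(x,u)·tan_{s,t}(y,v)); (2) if 1 + tan_{s,t}(x,u)·tan_{s,t}(y,v) ≠ 0, then tan_{s,t}(x ⊖_{u,v} y) = (tan_{s,t}(x,u) − tan_{s,t}(y,v))/(1 + tan_{s,t}(x,u)·tan_{s,t}(y,v)). -/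

import Mathlib

open scoped BigOperators

noncomputable section

/-- The Lucas sequence `{n}_{s,t}`. -/
def lucasSeq (s t : ℂ) : ℕ → ℂ
  | 0 => 0
  | 1 => 1
  | n + 2 => s * lucasSeq s t (n + 1) + t * lucasSeq s t n

/-- The Lucastorial `{n}_{s,t}!`. -/
def lucasFact (s t : ℂ) : ℕ → ℂ
  | 0 => 1
  | n + 1 => lucasFact s t n * lucasSeq s t (n + 1)

/-- The Lucasnomial coefficient `{n choose k}_{s,t}`. -/
def lucasBinom (s t : ℂ) (n k : ℕ) : ℂ :=
  lucasFact s t n / (lucasFact s t k * lucasFact s t (n - k))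

/-- The `(u,v)`-deformed Lucasnomial power `(x ⊕_{u,v} y)^{(n)}`. -/
def lucasPow (s t u v x y : ℂ) (n : ℕ) : ℂ :=
  ∑ k ∈ Finset.range (n + 1),
    lucasBinom s t n k * u ^ ((n - k).choose 2) * v ^ (k.choose 2) * x ^ (n - k) * y ^ k

/-- The Lucas-derivative with respect to the roots `p = φ`, `q = φ'`. -/
def lucasDeriv (p q : ℂ) (f : ℂ → ℂ) (x : ℂ) : ℂ :=
  (f (p * x) - f (q * x)) / ((p - q) * x)

/-- The Lucas-derivative, extended by `0` at `0`, as an operator suitable for iteration. -/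
def lucasDeriv0 (p q : ℂ) (f : ℂ → ℂ) : ℂ → ℂ :=
  fun x => if x = 0 then 0 else (f (p * x) - f (q * x)) / ((p - q) * x)

/-- The Lucas-Pantograph exponential `exp_{s,t}(z,u)`. -/
def lucasExp (s t u z : ℂ) : ℂ :=
  ∑' n : ℕ, u ^ (n.choose 2) * z ^ n / lucasFact s t n

/-- The Lucas-Pantograph sine `sin_{s,t}(z,u)`. -/
def lucasSin (s t u z : ℂ) : ℂ :=
  ∑' n : ℕ, (-1 : ℂ) ^ n * u ^ ((2 * n + 1).choose 2) * z ^ (2 * n + 1) / lucasFact s t (2 * n + 1)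

/-- The Lucas-Pantograph cosine `cos_{s,t}(z,u)`. -/
def lucasCos (s t u z : ℂ) : ℂ :=
  ∑' n : ℕ, (-1 : ℂ) ^ n * u ^ ((2 * n).choose 2) * z ^ (2 * n) / lucasFact s t (2 * n)

/-- The Lucas-Pantograph tangent. -/
def lucasTan (s t u z : ℂ) : ℂ := lucasSin s t u z / lucasCos s t u z

/-- The `(u,v)`-binomial sine. -/
def lucasSinBin (s t u v x y : ℂ) : ℂ :=
  ∑' n : ℕ, (-1 : ℂ) ^ n * lucasPow s t u v x y (2 * n + 1) / lucasFact s t (2 * n + 1)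

/-- The `(u,v)`-binomial cosine. -/
def lucasCosBin (s t u v x y : ℂ) : ℂ :=
  ∑' n : ℕ, (-1 : ℂ) ^ n * lucasPow s t u v x y (2 * n) / lucasFact s t (2 * n)

/-- The `(u,v)`-binomial tangent. -/
def lucasTanBin (s t u v x y : ℂ) : ℂ :=
  lucasSinBin s t u v x y / lucasCosBin s t u v x y

lemma lucasFact_ne_zero (s t : ℂ) (hL : ∀ n : ℕ, 1 ≤ n → lucasSeq s t n ≠ 0) :
    ∀ n, lucasFact s t n ≠ 0 := by
  intro n
  induction n with
  | zero => simp [lucasFact]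
  | succ n ih =>
    rw [lucasFact]
    exact mul_ne_zero ih (hL (n+1) (Nat.le_add_left 1 n))

def lpTerm (s t u x ε : ℂ) (m : ℕ) : ℂ :=
  ε ^ m * (u ^ (m.choose 2) * x ^ m / lucasFact s t m)

lemma lpTerm_norm (s t u x ε : ℂ) (hε : ‖ε‖ = 1) (m : ℕ) :
    ‖lpTerm s t u x ε m‖ = ‖u ^ (m.choose 2) * x ^ m / lucasFact s t m‖ := by
  rw [lpTerm, norm_mul, norm_pow, hε, one_pow, one_mul]

lemma lpTerm_norm_summable (s t u x ε : ℂ) (hε : ‖ε‖ = 1)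
    (hs : Summable fun n : ℕ =>
      ‖(-1 : ℂ) ^ n * u ^ ((2 * n + 1).choose 2) * x ^ (2 * n + 1) / lucasFact s t (2 * n + 1)‖)
    (hc : Summable fun n : ℕ =>
      ‖(-1 : ℂ) ^ n * u ^ ((2 * n).choose 2) * x ^ (2 * n) / lucasFact s t (2 * n)‖) :
    Summable fun m => ‖lpTerm s t u x ε m‖ := by
  apply Summable.even_add_odd
  · refine hc.congr fun n => ?_
    rw [lpTerm_norm s t u x ε hε, mul_div_assoc, norm_mul, norm_mul, norm_pow, norm_neg, norm_one,
      one_pow, one_mul, ← norm_mul, mul_div_assoc]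
  · refine hs.congr fun n => ?_
    rw [lpTerm_norm s t u x ε hε, mul_div_assoc, norm_mul, norm_mul, norm_pow, norm_neg, norm_one,
      one_pow, one_mul, ← norm_mul, mul_div_assoc]

lemma tsum_eps (ε : ℂ) (hε2 : ε ^ 2 = -1) (w : ℕ → ℂ)
    (hsum : Summable fun m => ε ^ m * w m) :
    ∑' m, ε ^ m * w m =
      (∑' k, (-1 : ℂ) ^ k * w (2 * k)) + ε * ∑' k, (-1 : ℂ) ^ k * w (2 * k + 1) := by
  have he : Summable fun k => ε ^ (2 * k) * w (2 * k) :=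
    hsum.comp_injective (i := fun k => 2 * k) (fun a b h => by simp only at h; omega)
  have ho : Summable fun k => ε ^ (2 * k + 1) * w (2 * k + 1) :=
    hsum.comp_injective (i := fun k => 2 * k + 1) (fun a b h => by simp only at h; omega)
  rw [← tsum_even_add_odd (f := fun m => ε ^ m * w m) he ho, ← tsum_mul_left]
  congr 1
  · exact tsum_congr fun k => by rw [pow_mul, hε2]
  · exact tsum_congr fun k => by rw [pow_add, pow_mul, hε2, pow_one]; ring

lemma tsum_lpTerm (s t u x ε : ℂ) (hε2 : ε ^ 2 = -1)
    (hsum : Summable fun m => lpTerm s t u x ε m) :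
    ∑' m, lpTerm s t u x ε m = lucasCos s t u x + ε * lucasSin s t u x := by
  have he : Summable fun k => lpTerm s t u x ε (2 * k) :=
    hsum.comp_injective (fun a b h => by omega)
  have ho : Summable fun k => lpTerm s t u x ε (2 * k + 1) :=
    hsum.comp_injective (fun a b h => by omega)
  rw [← tsum_even_add_odd he ho, lucasCos, lucasSin, ← tsum_mul_left]
  congr 1
  · exact tsum_congr fun k => by rw [lpTerm, pow_mul, hε2]; ring
  · exact tsum_congr fun k => by rw [lpTerm, pow_add, pow_mul, hε2, pow_one]; ring

lemma cauchy_term (s t u v x y : ℂ) (hF : ∀ n, lucasFact s t n ≠ 0) (ε : ℂ) (N : ℕ) :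
    ε ^ N * lucasPow s t u v x y N / lucasFact s t N =
      ∑ k ∈ Finset.range (N + 1), lpTerm s t u x ε k * lpTerm s t v y ε (N - k) := by
  rw [← Finset.sum_range_reflect (fun k => lpTerm s t u x ε k * lpTerm s t v y ε (N - k)) (N + 1)]
  rw [lucasPow, Finset.mul_sum, Finset.sum_div]
  refine Finset.sum_congr rfl fun j hj => ?_
  have hjN : j ≤ N := Nat.lt_succ_iff.mp (Finset.mem_range.mp hj)
  have h1 : N + 1 - 1 - j = N - j := by omega
  have h2 : N - (N - j) = j := by omega
  have hεN : ε ^ N = ε ^ (N - j) * ε ^ j := by rw [← pow_add]; congr 1; omega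
  rw [h1, h2, lpTerm, lpTerm, lucasBinom, hεN]
  have ha := hF j
  have hb := hF (N - j)
  have hc := hF N
  field_simp

lemma bin_cos_sin (s t : ℂ) (hL : ∀ n : ℕ, 1 ≤ n → lucasSeq s t n ≠ 0) (u v x y : ℂ)
    (hsx : Summable fun n : ℕ =>
      ‖(-1 : ℂ) ^ n * u ^ ((2 * n + 1).choose 2) * x ^ (2 * n + 1) / lucasFact s t (2 * n + 1)‖)
    (hcx : Summable fun n : ℕ =>
      ‖(-1 : ℂ) ^ n * u ^ ((2 * n).choose 2) * x ^ (2 * n) / lucasFact s t (2 * n)‖)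
    (hsy : Summable fun n : ℕ =>
      ‖(-1 : ℂ) ^ n * v ^ ((2 * n + 1).choose 2) * y ^ (2 * n + 1) / lucasFact s t (2 * n + 1)‖)
    (hcy : Summable fun n : ℕ =>
      ‖(-1 : ℂ) ^ n * v ^ ((2 * n).choose 2) * y ^ (2 * n) / lucasFact s t (2 * n)‖) :
    lucasCosBin s t u v x y =
      lucasCos s t u x * lucasCos s t v y - lucasSin s t u x * lucasSin s t v y ∧
    lucasSinBin s t u v x y =
      lucasSin s t u x * lucasCos s t v y + lucasCos s t u x * lucasSin s t v y := by
  have hF := lucasFact_ne_zero s t hL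
  have hI : ‖(Complex.I : ℂ)‖ = 1 := Complex.norm_I
  have hI' : ‖(-Complex.I : ℂ)‖ = 1 := by rw [norm_neg]; exact Complex.norm_I
  have hI2 : (Complex.I : ℂ) ^ 2 = -1 := Complex.I_sq
  have hI2' : (-Complex.I : ℂ) ^ 2 = -1 := by rw [neg_pow]; simp [Complex.I_sq]
  have key : ∀ ε : ℂ, ‖ε‖ = 1 → ε ^ 2 = -1 →
      lucasCosBin s t u v x y + ε * lucasSinBin s t u v x y =
        (lucasCos s t u x + ε * lucasSin s t u x) *
          (lucasCos s t v y + ε * lucasSin s t v y) := by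
    intro ε hε hε2
    have hnx := lpTerm_norm_summable s t u x ε hε hsx hcx
    have hny := lpTerm_norm_summable s t v y ε hε hsy hcy
    have h := hasSum_sum_range_mul_of_summable_norm hnx hny
    rw [tsum_lpTerm s t u x ε hε2 hnx.of_norm, tsum_lpTerm s t v y ε hε2 hny.of_norm] at h
    have hfun : (fun N => ∑ k ∈ Finset.range (N + 1),
        lpTerm s t u x ε k * lpTerm s t v y ε (N - k)) =
        fun N => ε ^ N * (lucasPow s t u v x y N / lucasFact s t N) := by
      funext N
      rw [← cauchy_term s t u v x y hF ε N, mul_div_assoc]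
    rw [hfun] at h
    have := tsum_eps ε hε2 (fun N => lucasPow s t u v x y N / lucasFact s t N) h.summable
    rw [h.tsum_eq] at this
    simp only [lucasCosBin, lucasSinBin]
    rw [this]
    congr 1
    · exact tsum_congr fun k => mul_div_assoc _ _ _
    · exact congrArg (ε * ·) (tsum_congr fun k => mul_div_assoc _ _ _)
  have eP := key Complex.I hI hI2
  have eQ := key (-Complex.I) hI' hI2'
  constructor
  · linear_combination (eP + eQ) / 2 + (lucasSin s t u x * lucasSin s t v y) * hI2
  · have h2I : (2 * Complex.I : ℂ) ≠ 0 := by simp [Complex.I_ne_zero]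
    apply mul_left_cancel₀ h2I
    linear_combination eP - eQ

lemma lucasSin_neg (s t v y : ℂ) : lucasSin s t v (-y) = -lucasSin s t v y := by
  rw [lucasSin, lucasSin, ← tsum_neg]
  exact tsum_congr fun n => by rw [Odd.neg_pow ⟨n, rfl⟩]; ring

lemma lucasCos_neg (s t v y : ℂ) : lucasCos s t v (-y) = lucasCos s t v y := by
  rw [lucasCos, lucasCos]
  exact tsum_congr fun n => by rw [Even.neg_pow ⟨n, two_mul n⟩]

/-- Tangent addition formulas. -/
theorem lucasTan_add_sub (s t : ℂ) (hs : s ≠ 0) (ht : t ≠ 0)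
    (hL : ∀ n : ℕ, 1 ≤ n → lucasSeq s t n ≠ 0)
    (x y u v : ℂ) (hu : u ≠ 0) (hv : v ≠ 0)
    (hconvsx : Summable fun n : ℕ =>
      ‖(-1 : ℂ) ^ n * u ^ ((2 * n + 1).choose 2) * x ^ (2 * n + 1) / lucasFact s t (2 * n + 1)‖)
    (hconvcx : Summable fun n : ℕ =>
      ‖(-1 : ℂ) ^ n * u ^ ((2 * n).choose 2) * x ^ (2 * n) / lucasFact s t (2 * n)‖)
    (hconvsy : Summable fun n : ℕ =>
      ‖(-1 : ℂ) ^ n * v ^ ((2 * n + 1).choose 2) * y ^ (2 * n + 1) / lucasFact s t (2 * n + 1)‖)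
    (hconvcy : Summable fun n : ℕ =>
      ‖(-1 : ℂ) ^ n * v ^ ((2 * n).choose 2) * y ^ (2 * n) / lucasFact s t (2 * n)‖)
    (hcx : lucasCos s t u x ≠ 0) (hcy : lucasCos s t v y ≠ 0) :
    (1 - lucasTan s t u x * lucasTan s t v y ≠ 0 →
      lucasTanBin s t u v x y =
        (lucasTan s t u x + lucasTan s t v y) /
          (1 - lucasTan s t u x * lucasTan s t v y)) ∧
    (1 + lucasTan s t u x * lucasTan s t v y ≠ 0 →
      lucasTanBin s t u v x (-y) =
        (lucasTan s t u x - lucasTan s t v y) /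
          (1 + lucasTan s t u x * lucasTan s t v y)) := by
  constructor
  · intro h
    obtain ⟨hc, hsn⟩ := bin_cos_sin s t hL u v x y hconvsx hconvcx hconvsy hconvcy
    have hden : lucasCos s t u x * lucasCos s t v y -
        lucasSin s t u x * lucasSin s t v y =
        (lucasCos s t u x * lucasCos s t v y) *
          (1 - lucasTan s t u x * lucasTan s t v y) := by
      rw [lucasTan, lucasTan]
      field_simp
    have h1 : lucasCos s t u x * lucasCos s t v y -
        lucasSin s t u x * lucasSin s t v y ≠ 0 := by
      rw [hden]; exact mul_ne_zero (mul_ne_zero hcx hcy) h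
    rw [lucasTanBin, hc, hsn, div_eq_div_iff h1 h, lucasTan, lucasTan]
    field_simp
    all_goals try ring
    all_goals exact Or.inl trivial
  · intro h
    have hconvsy' : Summable fun n : ℕ =>
        ‖(-1 : ℂ) ^ n * v ^ ((2 * n + 1).choose 2) * (-y) ^ (2 * n + 1) /
          lucasFact s t (2 * n + 1)‖ :=
      hconvsy.congr fun n => by
        rw [Odd.neg_pow ⟨n, rfl⟩, mul_neg, neg_div, norm_neg]
    have hconvcy' : Summable fun n : ℕ =>
        ‖(-1 : ℂ) ^ n * v ^ ((2 * n).choose 2) * (-y) ^ (2 * n) / lucasFact s t (2 * n)‖ :=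
      hconvcy.congr fun n => by rw [Even.neg_pow ⟨n, two_mul n⟩]
    obtain ⟨hc, hsn⟩ := bin_cos_sin s t hL u v x (-y) hconvsx hconvcx hconvsy' hconvcy'
    rw [lucasSin_neg, lucasCos_neg] at hc hsn
    have hden : lucasCos s t u x * lucasCos s t v y -
        lucasSin s t u x * -lucasSin s t v y =
        (lucasCos s t u x * lucasCos s t v y) *
          (1 + lucasTan s t u x * lucasTan s t v y) := by
      rw [lucasTan, lucasTan]
      field_simp
      try ring
    have h1 : lucasCos s t u x * lucasCos s t v y -
        lucasSin s t u x * -lucasSin s t v y ≠ 0 := by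
      rw [hden]; exact mul_ne_zero (mul_ne_zero hcx hcy) h
    rw [lucasTanBin, hc, hsn, div_eq_div_iff h1 h, lucasTan, lucasTan]
    field_simp
    all_goals try ring
    all_goals exact Or.inl trivial
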